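/- Let A, B, C be bounded linear operators on L²(ℝ,e). (1) Let Λ be a shifted Fourier multiplier operator with analytic zero-free multiplier m on S_(0,1), and suppose AΛf = ΛBf for all f ∈ D(Λ). Then Λ is injective, A maps the range of Λ into itself, and for every f ∈ D(Λ) one has B f = Λ^{-1} A Λ f; equivalently B Λ^{-1} g = Λ^{-1} A g for every g in the range of Λ. (2) Let Λ₁, Λ₂ be shifted Fourier multiplier operators with analytic zero-free multipliers m₁, m₂ on S_(0,1) satisfying the growth bound |m_i(ξ+i/2)| ≤ C_i e^{k_i|ξ|} (ξ ∈ ℝ) for some constants C_i, k_i > 0, and suppose AΛ₁ = Λ₁B on D(Λ₁) and BΛ₂ = Λ₂C on D(Λ₂). Let Λ₁₂ be the shifted Fourier multiplier operator with multiplier m₁·m₂. Then AΛ₁₂f = Λ₁₂Cf for every f ∈ D(Λ₁₂) = {f ∈ L²(ℝ,e) : m₁(·+i/2)m₂(·+i/2)·𝓕^e_f ∈ L²(ℝ)}. -/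

import Mathlib

open MeasureTheory Filter Set
open scoped Topology ENNReal

/-- The weighted measure `e^x dx` on `ℝ`, so that `L²(ℝ,e)` is `L²` of this measure. -/
noncomputable def expMeasure : Measure ℝ :=
  (volume : Measure ℝ).withDensity fun x => ENNReal.ofReal (Real.exp x)

/-- The Fourier integral `𝓕g(ξ) = (2π)^{-1/2} ∫ e^{-iξx} g(x) dx`. -/
noncomputable def fourierInt (g : ℝ → ℂ) (ξ : ℝ) : ℂ :=
  (Real.sqrt (2 * Real.pi) : ℂ)⁻¹ * ∫ x : ℝ, Complex.exp (-Complex.I * ξ * x) * g x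

/-- Given a model `Fe` of the shifted Fourier transform `𝓕^e : L²(ℝ,e) → L²(ℝ)` and a
multiplier `m`, `IsMult Fe m f g` expresses the relation `g = Λ f` for the shifted
Fourier multiplier operator `Λ` with multiplier `m`, i.e. `𝓕^e_g = m(·+i/2) ⬝ 𝓕^e_f` a.e.
(In particular it entails `f ∈ D(Λ)`, i.e. `m(·+i/2) ⬝ 𝓕^e_f ∈ L²(ℝ)`.) -/
def IsMult (Fe : Lp ℂ 2 expMeasure ≃ₗᵢ[ℂ] Lp ℂ 2 (volume : Measure ℝ))
    (m : ℂ → ℂ) (f g : Lp ℂ 2 expMeasure) : Prop :=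
  ⇑(Fe g) =ᵐ[volume] fun ξ : ℝ => m (ξ + Complex.I / 2) * (Fe f) ξ

private lemma strip_isOpen : IsOpen {z : ℂ | 0 < z.im ∧ z.im < 1} := by
  have h : {z : ℂ | 0 < z.im ∧ z.im < 1} = Complex.im ⁻¹' Ioo (0 : ℝ) 1 := by
    ext z; simp [Set.mem_Ioo]
  rw [h]
  exact isOpen_Ioo.preimage Complex.continuous_im

private lemma mem_strip (ξ : ℝ) :
    ((ξ : ℂ) + Complex.I / 2) ∈ {z : ℂ | 0 < z.im ∧ z.im < 1} := by
  have him : ((ξ : ℂ) + Complex.I / 2).im = 1 / 2 := by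
    simp [Complex.add_im, Complex.div_im, Complex.normSq]
  simp only [Set.mem_setOf_eq, him]
  norm_num

private lemma contLine {m : ℂ → ℂ}
    (hm : DifferentiableOn ℂ m {z : ℂ | 0 < z.im ∧ z.im < 1}) :
    Continuous fun ξ : ℝ => m ((ξ : ℂ) + Complex.I / 2) := by
  refine continuous_iff_continuousAt.2 fun ξ => ContinuousAt.comp ?_ ?_
  · exact (hm.differentiableAt (strip_isOpen.mem_nhds (mem_strip ξ))).continuousAt
  · exact (Complex.continuous_ofReal.add continuous_const).continuousAt

private lemma memLp_mul {φ u : ℝ → ℂ} (hφ : AEStronglyMeasurable φ volume)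
    {K : ℝ} (hK : ∀ ξ, ‖φ ξ‖ ≤ K) (hu : MemLp u 2 volume) :
    MemLp (fun ξ => φ ξ * u ξ) 2 volume :=
  MemLp.of_le_mul hu (hφ.mul hu.aestronglyMeasurable) <|
    Filter.Eventually.of_forall fun ξ => by
      rw [norm_mul]
      exact mul_le_mul_of_nonneg_right (hK ξ) (norm_nonneg _)

/-- sharp cutoff at `|ξ| ≤ n` -/
noncomputable def en (n : ℕ) (ξ : ℝ) : ℂ := if |ξ| ≤ (n : ℝ) then 1 else 0

private lemma en_meas (n : ℕ) : AEStronglyMeasurable (en n) (volume : Measure ℝ) :=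
  (Measurable.ite (measurableSet_le continuous_abs.measurable measurable_const)
    measurable_const measurable_const).aestronglyMeasurable

private lemma en_norm (n : ℕ) : ∀ ξ : ℝ, ‖en n ξ‖ ≤ 1 := by
  intro ξ; unfold en; split_ifs <;> simp

private lemma tendsto_eLpNorm_en {u : ℝ → ℂ} (hu : MemLp u 2 volume) :
    Tendsto (fun n : ℕ => eLpNorm (fun ξ => en n ξ * u ξ - u ξ) 2 volume) atTop (𝓝 0) := by
  have h2 : (2 : ℝ≥0∞) ≠ 0 := by norm_num
  have h2' : (2 : ℝ≥0∞) ≠ ∞ := by norm_num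
  have hI : Tendsto
      (fun n : ℕ => ∫⁻ ξ, (‖en n ξ * u ξ - u ξ‖₊ : ℝ≥0∞) ^ (2 : ℝ) ∂(volume : Measure ℝ))
      atTop (𝓝 0) := by
    have h0 : (𝓝 (0 : ℝ≥0∞)) = 𝓝 (∫⁻ ξ : ℝ, (‖(0:ℂ)‖₊ : ℝ≥0∞) ^ (2 : ℝ)) := by
      norm_num
    rw [h0]
    refine tendsto_lintegral_of_dominated_convergence'
      (fun ξ => (‖u ξ‖₊ : ℝ≥0∞) ^ (2 : ℝ)) (fun n => ?_) (fun n => ?_) ?_ ?_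
    · exact ((((en_meas n).mul hu.aestronglyMeasurable).sub
        hu.aestronglyMeasurable).enorm.pow_const _)
    · refine Filter.Eventually.of_forall fun ξ => ?_
      have hb : ‖en n ξ * u ξ - u ξ‖₊ ≤ ‖u ξ‖₊ := by
        unfold en; split_ifs <;> simp
      exact ENNReal.rpow_le_rpow (ENNReal.coe_le_coe.2 hb) (by norm_num)
    · exact (by simpa [enorm_eq_nnnorm] using (lintegral_rpow_enorm_lt_top_of_eLpNorm_lt_top h2 h2' hu.2) :
        ∫⁻ ξ, (‖u ξ‖₊ : ℝ≥0∞) ^ (2 : ℝ) ∂(volume : Measure ℝ) < ∞).ne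
    · refine Filter.Eventually.of_forall fun ξ => ?_
      have hev : ∀ᶠ n : ℕ in atTop,
          (‖en n ξ * u ξ - u ξ‖₊ : ℝ≥0∞) ^ (2 : ℝ) = (‖(0:ℂ)‖₊ : ℝ≥0∞) ^ (2 : ℝ) := by
        filter_upwards [eventually_ge_atTop ⌈|ξ|⌉₊] with n hn
        have h1 : |ξ| ≤ (n : ℝ) := le_trans (Nat.le_ceil _) (by exact_mod_cast hn)
        have : en n ξ * u ξ - u ξ = 0 := by simp [en, if_pos h1]
        rw [this]
      exact Tendsto.congr' (hev.mono fun n h => h.symm) tendsto_const_nhds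
  have key : Tendsto
      (fun n : ℕ => (∫⁻ ξ, (‖en n ξ * u ξ - u ξ‖₊ : ℝ≥0∞) ^ (2 : ℝ)
        ∂(volume : Measure ℝ)) ^ ((1:ℝ)/2)) atTop (𝓝 0) := by
    have hc : Tendsto (fun x : ℝ≥0∞ => x ^ ((1:ℝ)/2)) (𝓝 0) (𝓝 ((0:ℝ≥0∞) ^ ((1:ℝ)/2))) :=
      ENNReal.continuous_rpow_const.tendsto 0
    rw [ENNReal.zero_rpow_of_pos (by norm_num)] at hc
    exact hc.comp hI
  refine key.congr fun n => ?_
  rw [eLpNorm_eq_lintegral_rpow_enorm_toReal h2 h2']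
  norm_num [enorm_eq_nnnorm]

private lemma tendsto_trunc_toLp {w : ℝ → ℂ} (hw : MemLp w 2 volume)
    (v : ℕ → Lp ℂ 2 (volume : Measure ℝ))
    (hv : ∀ n, ⇑(v n) =ᵐ[volume] fun ξ => en n ξ * w ξ) :
    Tendsto v atTop (𝓝 (hw.toLp w)) := by
  rw [tendsto_iff_norm_sub_tendsto_zero]
  have hcore := tendsto_eLpNorm_en hw
  have heq : ∀ n, ‖v n - hw.toLp w‖
      = (eLpNorm (fun ξ => en n ξ * w ξ - w ξ) 2 volume).toReal := by
    intro n
    rw [Lp.norm_def]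
    congr 1
    apply eLpNorm_congr_ae
    filter_upwards [Lp.coeFn_sub (v n) (hw.toLp w), hv n, hw.coeFn_toLp] with ξ h1 h2 h3
    rw [h1, Pi.sub_apply, h2, h3]
  have h4 : Tendsto
      (fun n => (eLpNorm (fun ξ => en n ξ * w ξ - w ξ) 2 volume).toReal) atTop (𝓝 0) := by
    have := (ENNReal.tendsto_toReal (by norm_num : (0:ℝ≥0∞) ≠ ∞)).comp hcore
    exact this
  exact h4.congr fun n => (heq n).symm

private lemma isMult_inj (Fe : Lp ℂ 2 expMeasure ≃ₗᵢ[ℂ] Lp ℂ 2 (volume : Measure ℝ))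
    (m : ℂ → ℂ) (hm0 : ∀ z ∈ {z : ℂ | 0 < z.im ∧ z.im < 1}, m z ≠ 0) :
    ∀ f₁ f₂ g : Lp ℂ 2 expMeasure, IsMult Fe m f₁ g → IsMult Fe m f₂ g → f₁ = f₂ := by
  intro f₁ f₂ g h₁ h₂
  have h3 : ⇑(Fe f₁) =ᵐ[volume] ⇑(Fe f₂) := by
    filter_upwards [h₁, h₂] with ξ e₁ e₂
    exact mul_left_cancel₀ (hm0 _ (mem_strip ξ)) (e₁.symm.trans e₂)
  exact Fe.injective (Lp.ext h3)

theorem multiplier_intertwining_transitivity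
    (Fe : Lp ℂ 2 expMeasure ≃ₗᵢ[ℂ] Lp ℂ 2 (volume : Measure ℝ))
    (hFe : ∀ (f : ℝ → ℂ) (hf : MemLp f 2 expMeasure),
      Integrable (fun x => (Real.exp (x / 2) : ℂ) * f x) →
      ⇑(Fe (hf.toLp f)) =ᵐ[volume] fourierInt (fun x => (Real.exp (x / 2) : ℂ) * f x)) :
    (∀ (A B : Lp ℂ 2 expMeasure →L[ℂ] Lp ℂ 2 expMeasure) (m : ℂ → ℂ),
      DifferentiableOn ℂ m {z : ℂ | 0 < z.im ∧ z.im < 1} →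
      (∀ z ∈ {z : ℂ | 0 < z.im ∧ z.im < 1}, m z ≠ 0) →
      (∀ f g : Lp ℂ 2 expMeasure, IsMult Fe m f g → IsMult Fe m (B f) (A g)) →
        -- Λ is injective
        (∀ f₁ f₂ g : Lp ℂ 2 expMeasure,
          IsMult Fe m f₁ g → IsMult Fe m f₂ g → f₁ = f₂) ∧
        -- A maps the range of Λ into itself
        (∀ f g : Lp ℂ 2 expMeasure, IsMult Fe m f g →
          ∃ f' : Lp ℂ 2 expMeasure, IsMult Fe m f' (A g)) ∧
        -- B f = Λ⁻¹ A Λ f for f ∈ D(Λ)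
        (∀ f g : Lp ℂ 2 expMeasure, IsMult Fe m f g → IsMult Fe m (B f) (A g)) ∧
        -- equivalently B Λ⁻¹ g = Λ⁻¹ A g for g in the range of Λ
        (∀ f g f' : Lp ℂ 2 expMeasure,
          IsMult Fe m f g → IsMult Fe m f' (A g) → f' = B f)) ∧
    (∀ (A B C : Lp ℂ 2 expMeasure →L[ℂ] Lp ℂ 2 expMeasure) (m₁ m₂ : ℂ → ℂ),
      DifferentiableOn ℂ m₁ {z : ℂ | 0 < z.im ∧ z.im < 1} →
      (∀ z ∈ {z : ℂ | 0 < z.im ∧ z.im < 1}, m₁ z ≠ 0) →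
      DifferentiableOn ℂ m₂ {z : ℂ | 0 < z.im ∧ z.im < 1} →
      (∀ z ∈ {z : ℂ | 0 < z.im ∧ z.im < 1}, m₂ z ≠ 0) →
      (∃ C₁ k₁ : ℝ, 0 < C₁ ∧ 0 < k₁ ∧ ∀ ξ : ℝ,
        ‖m₁ (ξ + Complex.I / 2)‖ ≤ C₁ * Real.exp (k₁ * |ξ|)) →
      (∃ C₂ k₂ : ℝ, 0 < C₂ ∧ 0 < k₂ ∧ ∀ ξ : ℝ,
        ‖m₂ (ξ + Complex.I / 2)‖ ≤ C₂ * Real.exp (k₂ * |ξ|)) →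
      (∀ f g : Lp ℂ 2 expMeasure, IsMult Fe m₁ f g → IsMult Fe m₁ (B f) (A g)) →
      (∀ f g : Lp ℂ 2 expMeasure, IsMult Fe m₂ f g → IsMult Fe m₂ (C f) (B g)) →
      ∀ f g : Lp ℂ 2 expMeasure,
        IsMult Fe (fun z => m₁ z * m₂ z) f g →
        IsMult Fe (fun z => m₁ z * m₂ z) (C f) (A g)) := by
  constructor
  · intro A B m hmd hm0 hAB
    exact ⟨isMult_inj Fe m hm0, fun f g h => ⟨B f, hAB f g h⟩, hAB,
      fun f g f' h h' => isMult_inj Fe m hm0 f' (B f) (A g) h' (hAB f g h)⟩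
  · intro A B C m₁ m₂ hm₁d hm₁0 hm₂d hm₂0 _ _ hAB hBC f g hfg
    have hu : MemLp (⇑(Fe f)) 2 volume := Lp.memLp _
    have hw : MemLp (⇑(Fe g)) 2 volume := Lp.memLp _
    have hM₂c : Continuous fun ξ : ℝ => m₂ ((ξ : ℂ) + Complex.I / 2) := contLine hm₂d
    have ffun_mem : ∀ n : ℕ, MemLp (fun ξ => en n ξ * ⇑(Fe f) ξ) 2 volume :=
      fun n => memLp_mul (en_meas n) (en_norm n) hu
    have hfun_mem : ∀ n : ℕ, MemLp (fun ξ => en n ξ * ⇑(Fe g) ξ) 2 volume :=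
      fun n => memLp_mul (en_meas n) (en_norm n) hw
    have gfun_mem : ∀ n : ℕ,
        MemLp (fun ξ : ℝ => m₂ ((ξ : ℂ) + Complex.I / 2) * en n ξ * ⇑(Fe f) ξ) 2 volume := by
      intro n
      obtain ⟨K, hK⟩ := (isCompact_Icc (a := -(n:ℝ)) (b := (n:ℝ))).exists_bound_of_continuousOn
        hM₂c.continuousOn
      refine memLp_mul (hM₂c.aestronglyMeasurable.mul (en_meas n))
        (K := max K 0) (fun ξ => ?_) hu
      by_cases h : |ξ| ≤ (n : ℝ)
      · have h1 : en n ξ = 1 := by simp [en, if_pos h]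
        rw [norm_mul, h1]
        simp only [norm_one, mul_one]
        exact le_max_of_le_left (hK ξ (Set.mem_Icc.2 ⟨(abs_le.1 h).1, (abs_le.1 h).2⟩))
      · have h1 : en n ξ = 0 := by simp [en, if_neg h]
        rw [h1, mul_zero, norm_zero]
        exact le_max_right _ _
    -- the approximating sequences and the intertwining relation at level n
    have main : ∀ n : ℕ, ∃ fn hn : Lp ℂ 2 expMeasure,
        (⇑(Fe fn) =ᵐ[volume] fun ξ => en n ξ * ⇑(Fe f) ξ) ∧
        (⇑(Fe hn) =ᵐ[volume] fun ξ => en n ξ * ⇑(Fe g) ξ) ∧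
        (⇑(Fe (A hn)) =ᵐ[volume] fun ξ : ℝ =>
          m₁ ((ξ : ℂ) + Complex.I / 2) * m₂ ((ξ : ℂ) + Complex.I / 2) * ⇑(Fe (C fn)) ξ) := by
      intro n
      refine ⟨Fe.symm ((ffun_mem n).toLp _), Fe.symm ((hfun_mem n).toLp _), ?_, ?_, ?_⟩
      · rw [Fe.apply_symm_apply]; exact (ffun_mem n).coeFn_toLp
      · rw [Fe.apply_symm_apply]; exact (hfun_mem n).coeFn_toLp
      · have hg1 : IsMult Fe m₂ (Fe.symm ((ffun_mem n).toLp _))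
            (Fe.symm ((gfun_mem n).toLp _)) := by
          show ⇑(Fe (Fe.symm _)) =ᵐ[volume] _
          rw [Fe.apply_symm_apply, Fe.apply_symm_apply]
          filter_upwards [(gfun_mem n).coeFn_toLp, (ffun_mem n).coeFn_toLp] with ξ h1 h2
          rw [h1, h2, mul_assoc]
        have hg2 : IsMult Fe m₁ (Fe.symm ((gfun_mem n).toLp _))
            (Fe.symm ((hfun_mem n).toLp _)) := by
          show ⇑(Fe (Fe.symm _)) =ᵐ[volume] _
          rw [Fe.apply_symm_apply, Fe.apply_symm_apply]
          filter_upwards [(hfun_mem n).coeFn_toLp, (gfun_mem n).coeFn_toLp, hfg]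
            with ξ h1 h2 h3
          rw [h1, h3, h2]
          ring
        have e₁ := hAB _ _ hg2
        have e₂ := hBC _ _ hg1
        filter_upwards [e₁, e₂] with ξ k₁ k₂
        rw [k₁, k₂]
        ring
    choose fn hn hfn hhn hrel using main
    -- convergence of the sequences
    have hfn_lim : Tendsto fn atTop (𝓝 f) := by
      have h1 : Tendsto (fun n => Fe (fn n)) atTop (𝓝 (hu.toLp _)) :=
        tendsto_trunc_toLp hu _ hfn
      rw [Lp.toLp_coeFn _ hu] at h1
      have h3 : Tendsto (fun n => Fe.symm (Fe (fn n))) atTop (𝓝 (Fe.symm (Fe f))) :=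
        (Fe.symm.continuous.tendsto _).comp h1
      simpa only [LinearIsometryEquiv.symm_apply_apply] using h3
    have hhn_lim : Tendsto hn atTop (𝓝 g) := by
      have h1 : Tendsto (fun n => Fe (hn n)) atTop (𝓝 (hw.toLp _)) :=
        tendsto_trunc_toLp hw _ hhn
      rw [Lp.toLp_coeFn _ hw] at h1
      have h3 : Tendsto (fun n => Fe.symm (Fe (hn n))) atTop (𝓝 (Fe.symm (Fe g))) :=
        (Fe.symm.continuous.tendsto _).comp h1
      simpa only [LinearIsometryEquiv.symm_apply_apply] using h3
    have hCf_Lp : Tendsto (fun n => Fe (C (fn n))) atTop (𝓝 (Fe (C f))) :=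
      (Fe.continuous.tendsto _).comp ((C.continuous.tendsto _).comp hfn_lim)
    have hAh_Lp : Tendsto (fun n => Fe (A (hn n))) atTop (𝓝 (Fe (A g))) :=
      (Fe.continuous.tendsto _).comp ((A.continuous.tendsto _).comp hhn_lim)
    obtain ⟨ns, hns_mono, hns_ae⟩ :=
      (MeasureTheory.tendstoInMeasure_of_tendsto_Lp hCf_Lp).exists_seq_tendsto_ae
    have hA_sub : TendstoInMeasure volume (fun k => ⇑(Fe (A (hn (ns k))))) atTop
        ⇑(Fe (A g)) :=
      fun ε hε => ((MeasureTheory.tendstoInMeasure_of_tendsto_Lp hAh_Lp) ε hε).comp hns_mono.tendsto_atTop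
    obtain ⟨ms, hms_mono, hms_ae⟩ := hA_sub.exists_seq_tendsto_ae
    have hns_ae' : ∀ᵐ ξ ∂(volume : Measure ℝ),
        Tendsto (fun j => ⇑(Fe (C (fn (ns (ms j))))) ξ) atTop (𝓝 (⇑(Fe (C f)) ξ)) :=
      hns_ae.mono fun ξ h => h.comp hms_mono.tendsto_atTop
    have hrel_all : ∀ᵐ ξ ∂(volume : Measure ℝ), ∀ n : ℕ,
        ⇑(Fe (A (hn n))) ξ = m₁ ((ξ : ℂ) + Complex.I / 2) * m₂ ((ξ : ℂ) + Complex.I / 2)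
          * ⇑(Fe (C (fn n))) ξ :=
      ae_all_iff.2 fun n => hrel n
    show ⇑(Fe (A g)) =ᵐ[volume] _
    filter_upwards [hrel_all, hms_ae, hns_ae'] with ξ h1 h2 h3
    have h4 : Tendsto (fun j => ⇑(Fe (A (hn (ns (ms j))))) ξ) atTop
        (𝓝 (m₁ ((ξ : ℂ) + Complex.I / 2) * m₂ ((ξ : ℂ) + Complex.I / 2)
          * ⇑(Fe (C f)) ξ)) := by
      have h5 := (tendsto_const_nhds
        (x := m₁ ((ξ : ℂ) + Complex.I / 2) * m₂ ((ξ : ℂ) + Complex.I / 2))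
        (f := atTop (α := ℕ))).mul h3
      exact h5.congr fun j => (h1 _).symm
    exact tendsto_nhds_unique h2 h4
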